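/- arXiv:math/0607352 — 2 statements merged into one kernel-verified Lean document; each statement's English description precedes it below -/
import Mathlib

section
/- Let φ : G₁ → G₂ and ψ : H₁ → H₂ be graph morphisms, let αᵢ be an Hᵢ-labeling of Gᵢ (i = 1,2), and suppose ψ(α₁(u,{u,v})) = α₂(φ(u),{φ(u),φ(v)}) for all adjacent vertices u, v of G₁. Then F(u,i) = (φ(u),ψ(i)) maps V(G₁⋈_{α₁}H₁) into V(G₂⋈_{α₂}H₂) and is a graph morphism G₁⋈_{α₁}H₁ → G₂⋈_{α₂}H₂. -/
open Finset Filter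

open scoped Classical

universe u v

variable {V : Type u} {W : Type v}

/-- The generalized zig-zag product of an `H`-labeled graph `(G, α)` with `H`.
The labeling `α : D(G) → V(H)` is encoded as `α : V → V → W`, where for adjacent
vertices `u, v` the value `α u v` represents `α(u, {u,v})`. -/
def zigzag (G : SimpleGraph V) (H : SimpleGraph W) (α : V → V → W) :
    SimpleGraph (V × W) where
  Adj p q := G.Adj p.1 q.1 ∧ H.Adj (α p.1 q.1) p.2 ∧ H.Adj (α q.1 p.1) q.2
  symm := ⟨fun _ _ h => ⟨h.1.symm, h.2.2, h.2.1⟩⟩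
  loopless := ⟨fun p h => G.irrefl h.1⟩

/-- The vertex set of the zig-zag product `G ⋈_α H`:
pairs `(u, i)` such that some edge `e` of `G` is incident to `u` with `i`
adjacent to `α(u, e)` in `H`. -/
def zigzagVerts (G : SimpleGraph V) (H : SimpleGraph W) (α : V → V → W) :
    Set (V × W) :=
  {p | ∃ w, G.Adj p.1 w ∧ H.Adj (α p.1 w) p.2}

/-- Given graph morphisms `φ : G₁ → G₂`, `ψ : H₁ → H₂` with
`ψ(α₁(u,{u,v})) = α₂(φ u, {φ u, φ v})` for all adjacent `u, v`, the map
`F(u,i) = (φ u, ψ i)` maps `V(G₁ ⋈ H₁)` into `V(G₂ ⋈ H₂)` and is a graph morphism of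
the zig-zag products. -/
theorem zigzag_functorial {V₁ : Type*} {V₂ : Type*} {W₁ : Type*} {W₂ : Type*}
    (G₁ : SimpleGraph V₁) (G₂ : SimpleGraph V₂)
    (H₁ : SimpleGraph W₁) (H₂ : SimpleGraph W₂)
    (α₁ : V₁ → V₁ → W₁) (α₂ : V₂ → V₂ → W₂)
    (φ : V₁ → V₂) (ψ : W₁ → W₂)
    (hφ : ∀ x y : V₁, G₁.Adj x y → G₂.Adj (φ x) (φ y))
    (hψ : ∀ h h' : W₁, H₁.Adj h h' → H₂.Adj (ψ h) (ψ h'))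
    (hcomp : ∀ x y : V₁, G₁.Adj x y → ψ (α₁ x y) = α₂ (φ x) (φ y)) :
    (∀ p ∈ zigzagVerts G₁ H₁ α₁, (φ p.1, ψ p.2) ∈ zigzagVerts G₂ H₂ α₂) ∧
    (∀ p q : V₁ × W₁, (zigzag G₁ H₁ α₁).Adj p q →
      (zigzag G₂ H₂ α₂).Adj (φ p.1, ψ p.2) (φ q.1, ψ q.2)) := by
  constructor
  · rintro p ⟨w, hgw, hhw⟩
    exact ⟨φ w, hφ _ _ hgw, by rw [← hcomp _ _ hgw]; exact hψ _ _ hhw⟩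
  · rintro p q ⟨hg, h1, h2⟩
    exact ⟨hφ _ _ hg, by rw [← hcomp _ _ hg]; exact hψ _ _ h1,
      by rw [← hcomp _ _ hg.symm]; exact hψ _ _ h2⟩
end

section
/- Let G̃, G and H be finite simple graphs, α an H-labeling of G, and p : G̃ → G a combinatorial covering map with index m ≥ 1 that is surjective on vertices. Define β(x,{x,y}) = α(p(x),{p(x),p(y)}). Assume the zig-zag products G⋈_α H and G̃⋈_β H are nonempty and have no isolated vertices. Then every eigenvalue of the normalized Laplacian of G⋈_α H is an eigenvalue of the normalized Laplacian of G̃⋈_β H. -/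
open Finset Filter

open scoped Classical

universe u v

variable {V : Type u} {W : Type v}

/-- `π : G' → G` is a combinatorial covering map with index `m`: a graph morphism such
that (1) every edge `{u,v}` of `G` has exactly `m` edges of `G'` above it, and
(2) for `π x = π y` and `v` adjacent to `π x`, the sets `N(x) ∩ π⁻¹(v)` and
`N(y) ∩ π⁻¹(v)` have the same cardinality. -/
def IsCombCovering {V' : Type*} {V : Type*} (G' : SimpleGraph V') (G : SimpleGraph V)
    (π : V' → V) (m : ℕ) : Prop :=
  (∀ x y, G'.Adj x y → G.Adj (π x) (π y)) ∧
  (∀ u v, G.Adj u v →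
    {e : Sym2 V' | e ∈ G'.edgeSet ∧ ∃ x y, e = s(x, y) ∧ π x = u ∧ π y = v}.ncard = m) ∧
  (∀ x y, π x = π y → ∀ v, G.Adj (π x) v →
    (G'.neighborSet x ∩ π ⁻¹' {v}).ncard = (G'.neighborSet y ∩ π ⁻¹' {v}).ncard)

/-- The normalized Laplacian of a finite graph: `L(u,u) = 1`,
`L(u,v) = -1/√(val u · val v)` if `u ∼ v`, and `0` otherwise. -/
noncomputable def normLap {X : Type*} [Fintype X] (G : SimpleGraph X) : Matrix X X ℝ :=
  fun x y =>
    if x = y then 1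
    else if G.Adj x y then
      -(1 / Real.sqrt (((G.neighborSet x).ncard : ℝ) * ((G.neighborSet y).ncard : ℝ)))
    else 0

private lemma ncard_eq_card_filter {A : Type*} [Fintype A] (S : Set A) :
    S.ncard = (Finset.univ.filter (· ∈ S)).card := by
  rw [Set.ncard_eq_toFinset_card']
  congr 1
  ext a
  simp

private lemma ncard_setOf {A : Type*} [Fintype A] (P : A → Prop) [DecidablePred P] :
    {a | P a}.ncard = (Finset.univ.filter P).card := by
  rw [Set.ncard_eq_toFinset_card', Set.toFinset_setOf]

private lemma card_filter_prod {A B : Type*} [Fintype A] [Fintype B]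
    (P : A × B → Prop) [DecidablePred P] [∀ a, DecidablePred (fun b => P (a, b))] :
    (Finset.univ.filter P).card
      = ∑ a : A, (Finset.univ.filter (fun b => P (a, b))).card := by
  rw [Finset.card_eq_sum_card_fiberwise (f := Prod.fst) (t := Finset.univ)
    (fun x _ => Finset.mem_univ _)]
  refine Finset.sum_congr rfl fun a _ => ?_
  refine Finset.card_nbij' (fun q => q.2) (fun b => (a, b)) ?_ ?_ ?_ ?_
  · intro q hq
    simp only [Finset.mem_coe, Finset.mem_filter, Finset.mem_univ, true_and] at hq ⊢
    obtain ⟨a', b⟩ := q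
    obtain ⟨h1, rfl⟩ := hq
    exact h1
  · intro b hb
    simp only [Finset.mem_coe, Finset.mem_filter, Finset.mem_univ, true_and] at hb ⊢
    exact ⟨hb, trivial⟩
  · intro q hq
    simp only [Finset.mem_coe, Finset.mem_filter, Finset.mem_univ, true_and] at hq
    obtain ⟨a', b⟩ := q
    obtain ⟨h1, rfl⟩ := hq
    rfl
  · intro b _; rfl
private lemma zz_adj_iff (G : SimpleGraph V) (H : SimpleGraph W) (α : V → V → W)
    (q r : V × W) :
    (zigzag G H α).Adj q r ↔
      G.Adj q.1 r.1 ∧ H.Adj (α q.1 r.1) q.2 ∧ H.Adj (α r.1 q.1) r.2 := Iff.rfl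

private lemma adj_mem_verts (G : SimpleGraph V) (H : SimpleGraph W) (α : V → V → W)
    {q r : V × W} (h : (zigzag G H α).Adj q r) : r ∈ zigzagVerts G H α :=
  ⟨q.1, h.1.symm, h.2.2⟩

private lemma induce_neighbor_ncard {A : Type*} [Fintype A] (G : SimpleGraph A)
    (s : Set A) (q : s) (hsub : G.neighborSet (q : A) ⊆ s) :
    ((G.induce s).neighborSet q).ncard = (G.neighborSet (q : A)).ncard := by
  have himg : G.neighborSet (q : A) = Subtype.val '' ((G.induce s).neighborSet q) := by
    ext w
    constructor
    · intro hw
      exact ⟨⟨w, hsub hw⟩, by simpa using hw, rfl⟩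
    · rintro ⟨⟨w', hw'⟩, ha, rfl⟩
      simpa using ha
  rw [himg, Set.ncard_image_of_injective _ Subtype.val_injective]

private lemma normLap_induce_entry {A : Type*} [Fintype A] (G : SimpleGraph A)
    (s : Set A) (hsub : ∀ q r, G.Adj q r → r ∈ s) (q r : s) :
    normLap (G.induce s) q r =
      if (q : A) = r then 1
      else if G.Adj q r then
        -(1 / Real.sqrt (((G.neighborSet (q : A)).ncard : ℝ)
          * ((G.neighborSet (r : A)).ncard : ℝ)))
      else 0 := by
  have hq : ((G.induce s).neighborSet q).ncard = (G.neighborSet (q : A)).ncard :=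
    induce_neighbor_ncard G s q (fun w hw => hsub _ w hw)
  have hr : ((G.induce s).neighborSet r).ncard = (G.neighborSet (r : A)).ncard :=
    induce_neighbor_ncard G s r (fun w hw => hsub _ w hw)
  unfold normLap
  rcases eq_or_ne q r with rfl | hne
  · simp
  · have hne' : (q : A) ≠ (r : A) := fun h => hne (Subtype.ext h)
    rw [if_neg hne, if_neg hne']
    by_cases hadj : G.Adj q r
    · rw [if_pos (by simpa using hadj), if_pos hadj, hq, hr]
    · rw [if_neg (by simpa using hadj), if_neg hadj]

private lemma zigzag_deg [Fintype V] [Fintype W] (G : SimpleGraph V)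
    (H : SimpleGraph W) (α : V → V → W) (a : V) (i : W) :
    ((zigzag G H α).neighborSet (a, i)).ncard
      = ∑ v : V, if G.Adj a v ∧ H.Adj (α a v) i then (H.neighborSet (α v a)).ncard
          else 0 := by
  rw [ncard_eq_card_filter]
  have h1 : (Finset.univ.filter (· ∈ (zigzag G H α).neighborSet (a, i))).card
      = (Finset.univ.filter (fun q : V × W =>
          G.Adj a q.1 ∧ H.Adj (α a q.1) i ∧ H.Adj (α q.1 a) q.2)).card := by
    congr 1
    ext q
    simp [SimpleGraph.mem_neighborSet, zz_adj_iff]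
  have h2 := card_filter_prod (fun q : V × W =>
    G.Adj a q.1 ∧ H.Adj (α a q.1) i ∧ H.Adj (α q.1 a) q.2)
  trans (Finset.univ.filter (fun q : V × W =>
      G.Adj a q.1 ∧ H.Adj (α a q.1) i ∧ H.Adj (α q.1 a) q.2)).card
  · convert h1
  rw [h2]
  refine Finset.sum_congr rfl fun v _ => ?_
  by_cases h : G.Adj a v ∧ H.Adj (α a v) i
  · rw [if_pos h, ncard_eq_card_filter]
    congr 1
    ext j
    simp [h.1, h.2, SimpleGraph.mem_neighborSet]
  · rw [if_neg h]
    refine Finset.card_eq_zero.mpr (Finset.filter_eq_empty_iff.mpr ?_)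
    intro j _
    tauto

private lemma fiber_mul_count {V' : Type*} [Fintype V'] [Fintype V]
    (G' : SimpleGraph V') (G : SimpleGraph V) (p : V' → V) (m : ℕ)
    (hp : IsCombCovering G' G p m) {u v : V} (huv : G.Adj u v) {x : V'}
    (hx : p x = u) :
    (Finset.univ.filter (fun z => p z = u)).card
      * (G'.neighborSet x ∩ p ⁻¹' {v}).ncard = m := by
  have hconst : ∀ z, p z = u →
      (G'.neighborSet z ∩ p ⁻¹' {v}).ncard
        = (G'.neighborSet x ∩ p ⁻¹' {v}).ncard := by
    intro z hz
    exact hp.2.2 z x (by rw [hz, hx]) v (by rw [hz]; exact huv)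
  have hm := hp.2.1 u v huv
  -- identify the edge set with the image of the pair set
  have himg : {e : Sym2 V' | e ∈ G'.edgeSet ∧ ∃ a b, e = s(a, b) ∧ p a = u ∧ p b = v}
      = (fun q : V' × V' => s(q.1, q.2)) '' {q : V' × V' | G'.Adj q.1 q.2 ∧ p q.1 = u ∧ p q.2 = v} := by
    ext e
    constructor
    · rintro ⟨he, a, b, rfl, ha, hb⟩
      exact ⟨(a, b), ⟨(SimpleGraph.mem_edgeSet G').mp he, ha, hb⟩, rfl⟩
    · rintro ⟨⟨a, b⟩, ⟨hadj, ha, hb⟩, rfl⟩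
      exact ⟨(SimpleGraph.mem_edgeSet G').mpr hadj, a, b, rfl, ha, hb⟩
  have hinj : Set.InjOn (fun q : V' × V' => s(q.1, q.2))
      {q : V' × V' | G'.Adj q.1 q.2 ∧ p q.1 = u ∧ p q.2 = v} := by
    rintro ⟨a, b⟩ ⟨_, ha, hb⟩ ⟨a', b'⟩ ⟨_, ha', hb'⟩ hab
    rcases Sym2.eq_iff.mp hab with ⟨h1, h2⟩ | ⟨h1, h2⟩
    · simp only at h1 h2; rw [h1, h2]
    · exfalso
      exact huv.ne (ha.symm.trans (by rw [h1]; exact hb'))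
  have hT : {q : V' × V' | G'.Adj q.1 q.2 ∧ p q.1 = u ∧ p q.2 = v}.ncard = m := by
    rw [← hm, himg, Set.ncard_image_of_injOn hinj]
  have h2 := card_filter_prod (fun q : V' × V' =>
    G'.Adj q.1 q.2 ∧ p q.1 = u ∧ p q.2 = v)
  have h3 : ∀ a : V',
      (Finset.univ.filter (fun b => G'.Adj a b ∧ p a = u ∧ p b = v)).card
        = if p a = u then (G'.neighborSet a ∩ p ⁻¹' {v}).ncard else 0 := by
    intro a
    by_cases ha : p a = u
    · rw [if_pos ha, ncard_eq_card_filter]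
      congr 1; ext b
      simp [ha, SimpleGraph.mem_neighborSet, Set.mem_preimage]
    · rw [if_neg ha]
      refine Finset.card_eq_zero.mpr (Finset.filter_eq_empty_iff.mpr ?_)
      intro b _; tauto
  have h4 : {q : V' × V' | G'.Adj q.1 q.2 ∧ p q.1 = u ∧ p q.2 = v}.ncard
      = (Finset.univ.filter (fun z => p z = u)).card
        * (G'.neighborSet x ∩ p ⁻¹' {v}).ncard := by
    rw [ncard_setOf (fun q : V' × V' => G'.Adj q.1 q.2 ∧ p q.1 = u ∧ p q.2 = v), h2,
      Finset.sum_congr rfl (fun a _ => h3 a), ← Finset.sum_filter,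
      Finset.sum_congr rfl (fun a ha => hconst a (Finset.mem_filter.mp ha).2),
      Finset.sum_const, smul_eq_mul]
  rw [← hT, h4]

private lemma count_zero_of_not_adj {V' : Type*} [Fintype V'] [Fintype V]
    (G' : SimpleGraph V') (G : SimpleGraph V) (p : V' → V) (m : ℕ)
    (hp : IsCombCovering G' G p m) {u v : V} (huv : ¬ G.Adj u v) {x : V'}
    (hx : p x = u) : (G'.neighborSet x ∩ p ⁻¹' {v}).ncard = 0 := by
  have : G'.neighborSet x ∩ p ⁻¹' {v} = ∅ := by
    ext y
    simp only [Set.mem_inter_iff, SimpleGraph.mem_neighborSet, Set.mem_preimage,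
      Set.mem_singleton_iff, Set.mem_empty_iff_false, iff_false, not_and]
    intro hadj hy
    exact huv (by rw [← hx, ← hy]; exact hp.1 x y hadj)
  rw [this, Set.ncard_empty]

private lemma deg_rel {V' : Type*} [Fintype V'] [Fintype V] [Fintype W]
    (G' : SimpleGraph V') (G : SimpleGraph V) (H : SimpleGraph W)
    (α : V → V → W) (p : V' → V) (m : ℕ)
    (hp : IsCombCovering G' G p m) (x : V') (i : W) :
    (Finset.univ.filter (fun z => p z = p x)).card
      * ((zigzag G' H (fun a b => α (p a) (p b))).neighborSet (x, i)).ncard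
      = m * ((zigzag G H α).neighborSet (p x, i)).ncard := by
  rw [zigzag_deg, zigzag_deg]
  -- regroup the sum over V' by fibers of p
  have hgroup := Finset.sum_fiberwise_of_maps_to
    (s := (Finset.univ : Finset V')) (g := p) (t := Finset.univ)
    (fun y _ => Finset.mem_univ (p y))
    (fun y' => if G'.Adj x y' ∧ H.Adj (α (p x) (p y')) i
      then (H.neighborSet (α (p y') (p x))).ncard else 0)
  rw [← hgroup]
  -- inner sums
  have hinner : ∀ v : V,
      (∑ y' ∈ Finset.univ.filter (fun y' => p y' = v),
        if G'.Adj x y' ∧ H.Adj (α (p x) (p y')) i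
          then (H.neighborSet (α (p y') (p x))).ncard else 0)
      = (G'.neighborSet x ∩ p ⁻¹' {v}).ncard
        * (if H.Adj (α (p x) v) i then (H.neighborSet (α v (p x))).ncard else 0) := by
    intro v
    have hstep : ∀ y' ∈ Finset.univ.filter (fun y' => p y' = v),
        (if G'.Adj x y' ∧ H.Adj (α (p x) (p y')) i
          then (H.neighborSet (α (p y') (p x))).ncard else 0)
        = (if G'.Adj x y' then 1 else 0)
          * (if H.Adj (α (p x) v) i then (H.neighborSet (α v (p x))).ncard else 0) := by
      intro y' hy'
      have hv : p y' = v := (Finset.mem_filter.mp hy').2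
      rw [hv]
      by_cases h1 : G'.Adj x y' <;> by_cases h2 : H.Adj (α (p x) v) i <;>
        simp [h1, h2]
    rw [Finset.sum_congr rfl hstep, ← Finset.sum_mul]
    congr 1
    rw [Finset.sum_boole, Nat.cast_id, ncard_eq_card_filter, Finset.filter_filter]
    congr 1
    ext y'
    simp only [SimpleGraph.mem_neighborSet, Set.mem_inter_iff, Set.mem_preimage,
      Set.mem_singleton_iff, Finset.mem_filter, Finset.mem_univ, true_and]
    tauto
  rw [Finset.sum_congr rfl (fun v _ => hinner v), Finset.mul_sum, Finset.mul_sum]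
  refine Finset.sum_congr rfl fun v _ => ?_
  by_cases hGA : G.Adj (p x) v
  · have hfc := fiber_mul_count G' G p m hp hGA (rfl : p x = p x)
    rw [← mul_assoc, hfc]
    by_cases h2 : H.Adj (α (p x) v) i <;> simp [hGA, h2]
  · rw [count_zero_of_not_adj G' G p m hp hGA rfl]
    simp [hGA]

private lemma mem_verts_iff {V' : Type*} [Fintype V'] [Fintype V]
    (G' : SimpleGraph V') (G : SimpleGraph V) (H : SimpleGraph W)
    (α : V → V → W) (p : V' → V) (m : ℕ) (hm : 1 ≤ m)
    (hp : IsCombCovering G' G p m) (x : V') (i : W) :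
    (x, i) ∈ zigzagVerts G' H (fun a b => α (p a) (p b))
      ↔ (p x, i) ∈ zigzagVerts G H α := by
  constructor
  · rintro ⟨w, hadj, hH⟩
    exact ⟨p w, hp.1 _ _ hadj, hH⟩
  · rintro ⟨v, hGA, hH⟩
    have hfc := fiber_mul_count G' G p m hp hGA (rfl : p x = p x)
    have hc : (G'.neighborSet x ∩ p ⁻¹' {v}).ncard ≠ 0 := by
      intro h
      rw [h, mul_zero] at hfc
      omega
    obtain ⟨y, hy⟩ := Set.nonempty_of_ncard_ne_zero hc
    refine ⟨y, hy.1, ?_⟩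
    have hyv : p y = v := hy.2
    show H.Adj (α (p x) (p y)) i
    rw [hyv]
    exact hH
private lemma real_key (A B dq dr t : ℝ) (hA : 0 < A) (hB : 0 < B)
    (hdq : 0 ≤ dq) (hdr : 0 ≤ dr) :
    (A : ℝ) * (-(1 / Real.sqrt (A * dq * (B * dr))) * (Real.sqrt B * t))
      = Real.sqrt A * (-(1 / Real.sqrt (dq * dr)) * t) := by
  have h1 : Real.sqrt (A * dq * (B * dr))
      = Real.sqrt A * Real.sqrt B * Real.sqrt (dq * dr) := by
    rw [show A * dq * (B * dr) = A * (B * (dq * dr)) by ring,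
      Real.sqrt_mul hA.le, Real.sqrt_mul hB.le, ← mul_assoc]
  rw [h1]
  rcases eq_or_lt_of_le (Real.sqrt_nonneg (dq * dr)) with h0 | h0
  · rw [← h0]
    simp
  · have hsA := Real.sqrt_pos.mpr hA
    have hsB := Real.sqrt_pos.mpr hB
    have hAs : Real.sqrt A * Real.sqrt A = A := Real.mul_self_sqrt hA.le
    set a := Real.sqrt A with hadef
    set b := Real.sqrt B with hbdef
    set k := Real.sqrt (dq * dr) with hkdef
    have ha' : a ≠ 0 := hsA.ne'
    have hb' : b ≠ 0 := hsB.ne'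
    have hk' : k ≠ 0 := h0.ne'
    rw [← hAs]
    field_simp

/-- For finite graphs `G̃`, `G`, `H`, an `H`-labeling `α` of `G` and a
vertex-surjective combinatorial covering map `p : G̃ → G` with index `m ≥ 1`, with
`β(x,{x,y}) = α(p x, {p x, p y})` and both zig-zag products nonempty without isolated
vertices, every eigenvalue of the normalized Laplacian of `G ⋈_α H` is an eigenvalue of
the normalized Laplacian of `G̃ ⋈_β H`. -/
theorem zigzag_comb_cover_laplacian_spectrum {V' : Type*} [Fintype V'] [Fintype V]
    [Fintype W]
    (G' : SimpleGraph V') (G : SimpleGraph V) (H : SimpleGraph W)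
    (α : V → V → W) (p : V' → V) (m : ℕ) (hm : 1 ≤ m)
    (hp : IsCombCovering G' G p m) (hsurj : Function.Surjective p)
    (hne : (zigzagVerts G H α).Nonempty)
    (hne' : (zigzagVerts G' H (fun x y => α (p x) (p y))).Nonempty)
    (hnoiso : ∀ q ∈ zigzagVerts G H α, ∃ q', (zigzag G H α).Adj q q')
    (hnoiso' : ∀ q ∈ zigzagVerts G' H (fun x y => α (p x) (p y)),
      ∃ q', (zigzag G' H (fun x y => α (p x) (p y))).Adj q q') :
    ∀ μ : ℝ,
      (∃ x : ↥(zigzagVerts G H α) → ℝ, x ≠ 0 ∧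
        (normLap ((zigzag G H α).induce (zigzagVerts G H α))).mulVec x = μ • x) →
      ∃ y : ↥(zigzagVerts G' H (fun x y => α (p x) (p y))) → ℝ, y ≠ 0 ∧
        (normLap ((zigzag G' H (fun x y => α (p x) (p y))).induce
          (zigzagVerts G' H (fun x y => α (p x) (p y))))).mulVec y = μ • y := by
  intro μ hμ
  obtain ⟨xv, hxv0, heig⟩ := hμ
  have hmemiff : ∀ (a : V') (i : W),
      ((a, i) ∈ zigzagVerts G' H (fun x y => α (p x) (p y)))
        ↔ ((p a, i) ∈ zigzagVerts G H α) :=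
    fun a i => mem_verts_iff G' G H α p m hm hp a i
  have hmem' : ∀ q : ↥(zigzagVerts G' H (fun x y => α (p x) (p y))),
      (p q.1.1, q.1.2) ∈ zigzagVerts G H α :=
    fun q => (hmemiff q.1.1 q.1.2).mp q.2
  set lift : ↥(zigzagVerts G' H (fun x y => α (p x) (p y)))
      → ↥(zigzagVerts G H α) :=
    fun q => ⟨(p q.1.1, q.1.2), hmem' q⟩ with hliftdef
  set F : V → ℕ := fun u => (Finset.univ.filter (fun z => p z = u)).card with hFdef
  have hFpos : ∀ u, 0 < F u := by
    intro u
    obtain ⟨z, hz⟩ := hsurj u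
    exact Finset.card_pos.mpr ⟨z, by simp [hz]⟩
  have hApos : ∀ u, 0 < (m : ℝ) / (F u : ℝ) := fun u =>
    div_pos (by exact_mod_cast hm) (by exact_mod_cast hFpos u)
  -- real degree relation
  have hDval : ∀ b : ↥(zigzagVerts G' H (fun x y => α (p x) (p y))),
      (((zigzag G' H (fun x y => α (p x) (p y))).neighborSet b.1).ncard : ℝ)
        = (m : ℝ) / (F (p b.1.1) : ℝ)
          * (((zigzag G H α).neighborSet ((lift b).1)).ncard : ℝ) := by
    intro b
    have h := deg_rel G' G H α p m hp b.1.1 b.1.2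
    have hF : ((F (p b.1.1) : ℕ) : ℝ) ≠ 0 := by
      exact_mod_cast (hFpos (p b.1.1)).ne'
    have hcast : (F (p b.1.1) : ℝ)
        * (((zigzag G' H (fun x y => α (p x) (p y))).neighborSet
            (b.1.1, b.1.2)).ncard : ℝ)
        = (m : ℝ) * (((zigzag G H α).neighborSet (p b.1.1, b.1.2)).ncard : ℝ) := by
      rw [hFdef]
      exact_mod_cast h
    rw [hliftdef]
    rw [div_mul_eq_mul_div, eq_div_iff hF]
    calc (((zigzag G' H (fun x y => α (p x) (p y))).neighborSet b.1).ncard : ℝ)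
          * (F (p b.1.1) : ℝ)
        = (F (p b.1.1) : ℝ) * (((zigzag G' H (fun x y => α (p x) (p y))).neighborSet
            (b.1.1, b.1.2)).ncard : ℝ) := by ring
      _ = (m : ℝ) * (((zigzag G H α).neighborSet (p b.1.1, b.1.2)).ncard : ℝ) := hcast
  set y : ↥(zigzagVerts G' H (fun x y => α (p x) (p y))) → ℝ :=
    fun q => Real.sqrt ((m : ℝ) / (F (p q.1.1) : ℝ)) * xv (lift q) with hydef
  refine ⟨y, ?_, ?_⟩
  · -- nonzero
    obtain ⟨q0, hq0⟩ := Function.ne_iff.mp hxv0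
    obtain ⟨x0, hx0⟩ := hsurj q0.1.1
    have hmem0 : (x0, q0.1.2) ∈ zigzagVerts G' H (fun x y => α (p x) (p y)) :=
      (hmemiff x0 q0.1.2).mpr (by rw [hx0]; exact q0.2)
    intro h
    have h2 := congrFun h ⟨(x0, q0.1.2), hmem0⟩
    have hlq : lift ⟨(x0, q0.1.2), hmem0⟩ = q0 := by
      apply Subtype.ext
      show (p x0, (q0 : V × W).2) = (q0 : V × W)
      rw [hx0]
    simp only [hydef, Pi.zero_apply] at h2
    rw [hlq] at h2
    rcases mul_eq_zero.mp h2 with h3 | h3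
    · exact absurd h3 (Real.sqrt_ne_zero'.mpr (hApos (p x0))).elim
    · exact hq0 h3
  · -- eigen equation
    funext q'
    have hEntry' := normLap_induce_entry (zigzag G' H (fun x y => α (p x) (p y)))
      (zigzagVerts G' H (fun x y => α (p x) (p y)))
      (fun a b h => adj_mem_verts _ _ _ h)
    have hEntry := normLap_induce_entry (zigzag G H α) (zigzagVerts G H α)
      (fun a b h => adj_mem_verts _ _ _ h)
    have heq := congrFun heig (lift q')
    simp only [Matrix.mulVec, dotProduct, Pi.smul_apply, smul_eq_mul] at heq ⊢
    have hfib := Finset.sum_fiberwise_of_maps_to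
      (s := (Finset.univ : Finset ↥(zigzagVerts G' H (fun x y => α (p x) (p y)))))
      (t := Finset.univ) (g := lift) (fun b _ => Finset.mem_univ (lift b))
      (fun b => normLap ((zigzag G' H (fun x y => α (p x) (p y))).induce
        (zigzagVerts G' H (fun x y => α (p x) (p y)))) q' b * y b)
    rw [← hfib]
    have key : ∀ r : ↥(zigzagVerts G H α),
        (∑ b ∈ Finset.univ.filter (fun b => lift b = r),
          normLap ((zigzag G' H (fun x y => α (p x) (p y))).induce
            (zigzagVerts G' H (fun x y => α (p x) (p y)))) q' b * y b)
        = Real.sqrt ((m : ℝ) / (F (p q'.1.1) : ℝ))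
          * (normLap ((zigzag G H α).induce (zigzagVerts G H α)) (lift q') r
            * xv r) := by
      intro r
      rcases eq_or_ne r (lift q') with rfl | hner
      · -- diagonal fiber
        rw [Finset.sum_eq_single q']
        · rw [hEntry' q' q', if_pos rfl, hEntry (lift q') (lift q'), if_pos rfl,
            one_mul, one_mul]
        · intro b hb hbne
          have hlb : lift b = lift q' := (Finset.mem_filter.mp hb).2
          rw [hEntry' q' b, if_neg (fun hc => hbne (Subtype.ext hc.symm)), if_neg, zero_mul]
          intro hadj
          have hG := hp.1 _ _ hadj.1
          have hpp : p b.1.1 = p q'.1.1 := by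
            have h1 := congrArg Prod.fst (Subtype.ext_iff.mp hlb)
            simpa [hliftdef] using h1
          rw [hpp] at hG
          exact G.irrefl hG
        · intro hnotin
          exact absurd (by simp : q' ∈ Finset.univ.filter (fun b => lift b = lift q'))
            hnotin
      · by_cases hadjQR : (zigzag G H α).Adj ((lift q' : V × W)) (r : V × W)
        · -- adjacent case
          have hG : G.Adj (p q'.1.1) r.1.1 := hadjQR.1
          have hHi : H.Adj (α (p q'.1.1) r.1.1) q'.1.2 := hadjQR.2.1
          have hHj : H.Adj (α r.1.1 (p q'.1.1)) r.1.2 := hadjQR.2.2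
          rw [hEntry (lift q') r, if_neg (fun hc => hner (Subtype.ext hc.symm)),
            if_pos hadjQR]
          set dq : ℝ := (((zigzag G H α).neighborSet ((lift q' : V × W))).ncard : ℝ)
            with hdq
          set dr : ℝ := (((zigzag G H α).neighborSet ((r : V × W))).ncard : ℝ)
            with hdr2
          set A : ℝ := (m : ℝ) / (F (p q'.1.1) : ℝ) with hA
          set B : ℝ := (m : ℝ) / (F r.1.1 : ℝ) with hB
          have hApos' : 0 < A := by rw [hA]; exact hApos _
          have hBpos' : 0 < B := by rw [hB]; exact hApos _
          have hterm : ∀ b ∈ Finset.univ.filter (fun b => lift b = r),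
              normLap ((zigzag G' H (fun x y => α (p x) (p y))).induce
                (zigzagVerts G' H (fun x y => α (p x) (p y)))) q' b * y b
              = if G'.Adj q'.1.1 b.1.1 then
                  -(1 / Real.sqrt (A * dq * (B * dr))) * (Real.sqrt B * xv r)
                else 0 := by
            intro b hb
            have hlb : lift b = r := (Finset.mem_filter.mp hb).2
            have hpb : p b.1.1 = r.1.1 := by
              have h1 := congrArg Prod.fst (Subtype.ext_iff.mp hlb)
              simpa [hliftdef] using h1
            have hbnq : ((q' : V' × W)) ≠ (b : V' × W) := by
              intro hc
              have hbq : b = q' := Subtype.ext hc.symm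
              rw [hbq] at hlb
              exact hner hlb.symm
            rw [hEntry' q' b, if_neg hbnq]
            by_cases hadjb : (zigzag G' H (fun x y => α (p x) (p y))).Adj
              (q' : V' × W) (b : V' × W)
            · rw [if_pos hadjb, if_pos hadjb.1]
              have e1 : (((zigzag G' H (fun x y => α (p x) (p y))).neighborSet
                  (q' : V' × W)).ncard : ℝ) = A * dq := by
                rw [hDval q', ← hA, ← hdq]
              have e2 : (((zigzag G' H (fun x y => α (p x) (p y))).neighborSet
                  (b : V' × W)).ncard : ℝ) = B * dr := by
                rw [hDval b, hpb, hlb, ← hB, ← hdr2]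
              have e3 : y b = Real.sqrt B * xv r := by
                simp only [hydef]
                rw [hpb, hlb, ← hB]
              rw [e1, e2, e3]
            · rw [if_neg hadjb, zero_mul, if_neg]
              intro hG'
              apply hadjb
              refine ⟨hG', ?_, ?_⟩
              · show H.Adj (α (p q'.1.1) (p b.1.1)) q'.1.2
                rw [hpb]
                exact hHi
              · show H.Adj (α (p b.1.1) (p q'.1.1)) b.1.2
                have hsb : b.1.2 = r.1.2 := by
                  have h1 := congrArg Prod.snd (Subtype.ext_iff.mp hlb)
                  simpa [hliftdef] using h1
                rw [hpb, hsb]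
                exact hHj
          rw [Finset.sum_congr rfl hterm, ← Finset.sum_filter, Finset.sum_const,
            Finset.filter_filter, nsmul_eq_mul]
          have hfc : F (p q'.1.1)
              * (G'.neighborSet q'.1.1 ∩ p ⁻¹' {r.1.1}).ncard = m := by
            rw [hFdef]
            exact fiber_mul_count G' G p m hp hG rfl
          have hFne : ((F (p q'.1.1) : ℕ) : ℝ) ≠ 0 := by
            exact_mod_cast (hFpos (p q'.1.1)).ne'
          have hcR : (((G'.neighborSet q'.1.1 ∩ p ⁻¹' {r.1.1}).ncard : ℕ) : ℝ)
              = A := by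
            rw [hA, eq_div_iff hFne]
            have hfc' : (G'.neighborSet q'.1.1 ∩ p ⁻¹' {r.1.1}).ncard
                * F (p q'.1.1) = m := by rw [Nat.mul_comm]; exact hfc
            exact_mod_cast hfc'
          have hcount : (Finset.univ.filter
              (fun b => lift b = r ∧ G'.Adj q'.1.1 b.1.1)).card
              = (G'.neighborSet q'.1.1 ∩ p ⁻¹' {r.1.1}).ncard := by
            rw [ncard_eq_card_filter]
            refine Finset.card_nbij (fun b => b.1.1) ?_ ?_ ?_
            · intro b hb
              simp only [Finset.mem_coe, Finset.mem_filter, Finset.mem_univ, true_and] at hb ⊢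
              obtain ⟨hlb, hadjb⟩ := hb
              have hpb : p b.1.1 = r.1.1 := by
                have h1 := congrArg Prod.fst (Subtype.ext_iff.mp hlb)
                simpa [hliftdef] using h1
              exact ⟨hadjb, hpb⟩
            · intro b1 h1 b2 h2 heq12
              simp only [Finset.coe_filter, Set.mem_setOf_eq, Finset.mem_univ,
                true_and] at h1 h2
              have hs1 : b1.1.2 = r.1.2 := by
                have hx1 := congrArg Prod.snd (Subtype.ext_iff.mp h1.1)
                simpa [hliftdef] using hx1
              have hs2 : b2.1.2 = r.1.2 := by
                have hx2 := congrArg Prod.snd (Subtype.ext_iff.mp h2.1)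
                simpa [hliftdef] using hx2
              apply Subtype.ext
              exact Prod.ext heq12 (hs1.trans hs2.symm)
            · intro z hz
              simp only [Finset.coe_filter, Set.mem_setOf_eq, Finset.mem_univ,
                true_and] at hz
              have hadjz : G'.Adj q'.1.1 z := hz.1
              have hpz : p z = r.1.1 := hz.2
              have hmemz : (z, r.1.2) ∈ zigzagVerts G' H (fun x y => α (p x) (p y)) := by
                refine ⟨q'.1.1, hadjz.symm, ?_⟩
                show H.Adj (α (p z) (p q'.1.1)) r.1.2
                rw [hpz]
                exact hHj
              refine ⟨⟨(z, r.1.2), hmemz⟩, ?_, rfl⟩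
              simp only [Finset.mem_coe, Finset.mem_filter, Finset.mem_univ, true_and]
              constructor
              · apply Subtype.ext
                show (p z, r.1.2) = (r : V × W)
                rw [hpz]
              · exact hadjz
          rw [hcount, hcR]
          exact real_key A B dq dr (xv r) hApos' hBpos'
            (by rw [hdq]; exact Nat.cast_nonneg _) (by rw [hdr2]; exact Nat.cast_nonneg _)
        · -- not adjacent: everything vanishes
          rw [hEntry (lift q') r,
            if_neg (fun hc => hner (Subtype.ext hc.symm)), if_neg hadjQR,
            zero_mul, mul_zero]
          refine Finset.sum_eq_zero fun b hb => ?_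
          have hlb : lift b = r := (Finset.mem_filter.mp hb).2
          rw [hEntry' q' b, if_neg, if_neg, zero_mul]
          · intro hadj
            apply hadjQR
            have h1 : G.Adj (p q'.1.1) (p b.1.1) := hp.1 _ _ hadj.1
            refine ⟨?_, ?_, ?_⟩
            · show G.Adj (lift q' : V × W).1 (r : V × W).1
              rw [← hlb]
              exact h1
            · show H.Adj (α (lift q' : V × W).1 (r : V × W).1) (lift q' : V × W).2
              rw [← hlb]
              exact hadj.2.1
            · show H.Adj (α (r : V × W).1 (lift q' : V × W).1) (r : V × W).2
              rw [← hlb]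
              exact hadj.2.2
          · intro hc
            have hbq : b = q' := Subtype.ext hc.symm
            rw [hbq] at hlb
            exact hner hlb.symm
    rw [Finset.sum_congr rfl (fun r _ => key r), ← Finset.mul_sum, heq]
    simp only [hydef]
    ring
end
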